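/- Let ρ = Σ_i p_i ρ_i be a convex combination of density matrices on a finite-dimensional Hilbert space, where (p_i) is a probability distribution. Then S(Σ_i p_i ρ_i) − Σ_i p_i S(ρ_i) ≤ H(p), where S is the von Neumann entropy and H(p) = −Σ_i p_i log p_i is the Shannon entropy of (p_i). -/

import Mathlib

open Matrix ComplexOrder

/-- The von Neumann entropy `S(ρ) = −tr(ρ log ρ)` of a matrix, computed from the
eigenvalues when the matrix is Hermitian (and set to `0` otherwise). -/
noncomputable def vnEntropy {n : ℕ} (ρ : Matrix (Fin n) (Fin n) ℂ) : ℝ :=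
  if h : ρ.IsHermitian then ∑ i, Real.negMulLog (h.eigenvalues i) else 0

section MixAux

/-- Sub-Jensen inequality for `negMulLog`: weights summing to at most 1. -/
lemma negMulLog_sum_le' {κ : Type*} (s : Finset κ) (t x : κ → ℝ)
    (ht0 : ∀ k ∈ s, 0 ≤ t k) (hts : ∑ k ∈ s, t k ≤ 1) (hx : ∀ k ∈ s, 0 ≤ x k) :
    ∑ k ∈ s, t k * Real.negMulLog (x k) ≤ Real.negMulLog (∑ k ∈ s, t k * x k) := by
  have hc0 : 0 ≤ ∑ k ∈ s, t k := Finset.sum_nonneg ht0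
  rcases eq_or_lt_of_le hc0 with h | h
  · have hz : ∀ k ∈ s, t k = 0 := (Finset.sum_eq_zero_iff_of_nonneg ht0).mp h.symm
    have e1 : ∑ k ∈ s, t k * Real.negMulLog (x k) = 0 :=
      Finset.sum_eq_zero fun k hk => by rw [hz k hk, zero_mul]
    have e2 : ∑ k ∈ s, t k * x k = 0 :=
      Finset.sum_eq_zero fun k hk => by rw [hz k hk, zero_mul]
    rw [e1, e2]; simp
  · set c := ∑ k ∈ s, t k with hc
    have key := Real.concaveOn_negMulLog.le_map_sum (t := s) (w := fun k => t k / c)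
      (p := x) (fun k hk => div_nonneg (ht0 k hk) hc0)
      (by rw [← Finset.sum_div, ← hc]; field_simp) (fun k hk => hx k hk)
    simp only [smul_eq_mul] at key
    set S := ∑ k ∈ s, t k * x k with hS
    have hS0 : 0 ≤ S := Finset.sum_nonneg fun k hk => mul_nonneg (ht0 k hk) (hx k hk)
    have hsum1 : ∑ k ∈ s, t k / c * Real.negMulLog (x k)
        = (∑ k ∈ s, t k * Real.negMulLog (x k)) / c := by
      rw [Finset.sum_div]; exact Finset.sum_congr rfl fun k _ => by ring
    have hsum2 : ∑ k ∈ s, t k / c * x k = S / c := by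
      rw [hS, Finset.sum_div]; exact Finset.sum_congr rfl fun k _ => by ring
    rw [hsum1, hsum2] at key
    have key2 : ∑ k ∈ s, t k * Real.negMulLog (x k) ≤ c * Real.negMulLog (S / c) :=
      (div_le_iff₀' h).mp key
    refine key2.trans ?_
    have heq : c * Real.negMulLog (S / c) = Real.negMulLog S + S * Real.log c := by
      rcases eq_or_lt_of_le hS0 with h0 | h0
      · simp [← h0, Real.negMulLog]
      · rw [Real.negMulLog, Real.negMulLog, Real.log_div (by positivity) (by positivity)]
        field_simp
        ring
    rw [heq]
    have hlogc : Real.log c ≤ 0 := Real.log_nonpos hc0 hts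
    nlinarith

lemma conj_outer_entry {n : ℕ} (U : Matrix (Fin n) (Fin n) ℂ) (u : Fin n → ℂ) (k k' : Fin n) :
    (star U * vecMulVec u (star u) * U) k k'
      = ((star U *ᵥ u) k) * star ((star U *ᵥ u) k') := by
  simp only [Matrix.mul_apply, vecMulVec_apply, Pi.star_apply, mulVec, dotProduct,
    Matrix.star_apply, star_sum, star_mul', star_star, Finset.sum_mul, Finset.mul_sum]
  refine Finset.sum_congr rfl fun m _ => Finset.sum_congr rfl fun m' _ => ?_
  ring

lemma quad_form_sum {n : ℕ} {α : Type*} [Fintype α] (M : α → Matrix (Fin n) (Fin n) ℂ)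
    (x : Fin n → ℂ) : star x ⬝ᵥ (∑ a, M a) *ᵥ x = ∑ a, star x ⬝ᵥ (M a) *ᵥ x := by
  induction (Finset.univ : Finset α) using Finset.cons_induction with
  | empty => simp
  | cons a s ha ih => rw [Finset.sum_cons, Finset.sum_cons, add_mulVec, dotProduct_add, ih]

lemma quad_form_outer {n : ℕ} (u x : Fin n → ℂ) :
    star x ⬝ᵥ (vecMulVec u (star u)) *ᵥ x = (star x ⬝ᵥ u) * star (star x ⬝ᵥ u) := by
  simp only [mulVec, dotProduct, vecMulVec_apply, Pi.star_apply, star_sum, star_mul',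
    star_star, Finset.mul_sum, Finset.sum_mul]
  rw [Finset.sum_comm]
  refine Finset.sum_congr rfl fun m _ => Finset.sum_congr rfl fun m' _ => ?_
  ring

lemma psd_of_sum_outer {n : ℕ} {α : Type*} [Fintype α] (ψ : α → Fin n → ℂ) :
    PosSemidef (∑ a, vecMulVec (ψ a) (star (ψ a))) := by
  refine PosSemidef.of_dotProduct_mulVec_nonneg ?_ ?_
  · unfold Matrix.IsHermitian
    rw [conjTranspose_sum]
    refine Finset.sum_congr rfl fun a _ => ?_
    ext m m'
    simp [vecMulVec_apply, conjTranspose_apply, mul_comm]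
  · intro x
    rw [quad_form_sum]
    refine Finset.sum_nonneg fun a _ => ?_
    rw [quad_form_outer]
    exact mul_star_self_nonneg _

lemma entropy_sum_outer_le {n : ℕ} {α : Type*} [Fintype α] (ψ : α → Fin n → ℂ) :
    vnEntropy (∑ a, vecMulVec (ψ a) (star (ψ a))) ≤
      ∑ a, Real.negMulLog (∑ m, ‖ψ a m‖ ^ 2) := by
  classical
  have hpsd := psd_of_sum_outer ψ
  have hH : (∑ a, vecMulVec (ψ a) (star (ψ a))).IsHermitian := hpsd.isHermitian
  set ρ : Matrix (Fin n) (Fin n) ℂ := ∑ a, vecMulVec (ψ a) (star (ψ a)) with hρdef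
  rw [vnEntropy, dif_pos hH]
  set lam := hH.eigenvalues with hlam
  have hlam0 : ∀ k, 0 ≤ lam k := hpsd.eigenvalues_nonneg
  set U : Matrix (Fin n) (Fin n) ℂ :=
    (Matrix.IsHermitian.eigenvectorUnitary hH : Matrix (Fin n) (Fin n) ℂ) with hU
  set φ : α → Fin n → ℂ := fun a => (star U) *ᵥ ψ a with hφ
  have hF2 : ∀ k k', ∑ a, φ a k * star (φ a k') = if k = k' then (lam k : ℂ) else 0 := by
    intro k k'
    have hdiag : star U * ρ * U = diagonal (RCLike.ofReal ∘ lam) := by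
      have := hH.conjStarAlgAut_star_eigenvectorUnitary
      rwa [Unitary.conjStarAlgAut_star_apply] at this
    have h1 : (star U * ρ * U) k k' = ∑ a, φ a k * star (φ a k') := by
      rw [hρdef, Finset.mul_sum, Finset.sum_mul]
      rw [Matrix.sum_apply]
      exact Finset.sum_congr rfl fun a _ => conj_outer_entry U (ψ a) k k'
    rw [← h1, hdiag]
    simp [Matrix.diagonal_apply, Function.comp]
  have hcol : ∀ k, ∑ a, ‖φ a k‖ ^ 2 = lam k := by
    intro k
    have h := hF2 k k
    simp only [if_pos rfl] at h
    have h2 : ∀ a, φ a k * star (φ a k) = ((‖φ a k‖ ^ 2 : ℝ) : ℂ) := by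
      intro a
      rw [RCLike.star_def, Complex.mul_conj, Complex.normSq_eq_norm_sq]
    rw [Finset.sum_congr rfl fun a _ => h2 a, ← Complex.ofReal_sum] at h
    simp only [if_true] at h
    exact_mod_cast h
  have hφzero : ∀ k, lam k = 0 → ∀ a, φ a k = 0 := by
    intro k hk a
    have h := hcol k
    rw [hk] at h
    have := (Finset.sum_eq_zero_iff_of_nonneg (fun b _ => by positivity)).mp h a (Finset.mem_univ a)
    simpa using this
  have hF1 : ∀ a, ∑ k, ‖φ a k‖ ^ 2 = ∑ m, ‖ψ a m‖ ^ 2 := by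
    intro a
    have hcomplex : star (φ a) ⬝ᵥ φ a = star (ψ a) ⬝ᵥ ψ a := by
      rw [hφ]
      rw [Matrix.star_mulVec, Matrix.dotProduct_mulVec, Matrix.vecMul_vecMul]
      rw [Matrix.star_eq_conjTranspose, Matrix.conjTranspose_conjTranspose]
      have hUU : U * Uᴴ = 1 := by
        rw [← Matrix.star_eq_conjTranspose]
        exact (Matrix.mem_unitaryGroup_iff).mp (Matrix.IsHermitian.eigenvectorUnitary hH).2
      rw [hUU, Matrix.vecMul_one]
    have expand : ∀ (v : Fin n → ℂ), star v ⬝ᵥ v = ((∑ k, ‖v k‖ ^ 2 : ℝ) : ℂ) := by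
      intro v
      rw [Complex.ofReal_sum]
      simp only [dotProduct, Pi.star_apply]
      refine Finset.sum_congr rfl fun k _ => ?_
      rw [RCLike.star_def, mul_comm, Complex.mul_conj, Complex.normSq_eq_norm_sq]
    rw [expand, expand] at hcomplex
    exact_mod_cast hcomplex
  -- Bessel: fact F3
  have hF3 : ∀ a, ∑ k ∈ Finset.univ.filter (fun k => lam k ≠ 0), ‖φ a k‖ ^ 2 / lam k ≤ 1 := by
    intro a
    set v : {k : Fin n // lam k ≠ 0} → EuclideanSpace ℂ α :=
      fun k => WithLp.toLp 2 fun b => star (φ b k.1) * (((Real.sqrt (lam k.1))⁻¹ : ℝ) : ℂ) with hv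
    have hlampos : ∀ k : {k : Fin n // lam k ≠ 0}, 0 < lam k.1 :=
      fun k => lt_of_le_of_ne (hlam0 k.1) (Ne.symm k.2)
    have hvon : Orthonormal ℂ v := by
      rw [orthonormal_iff_ite]
      intro k k'
      have hinner : (inner ℂ (v k) (v k') : ℂ) =
          (((Real.sqrt (lam k.1))⁻¹ : ℝ) : ℂ) * (((Real.sqrt (lam k'.1))⁻¹ : ℝ) : ℂ) *
            (if k.1 = k'.1 then (lam k.1 : ℂ) else 0) := by
        rw [PiLp.inner_apply, ← hF2 k.1 k'.1, Finset.mul_sum]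
        refine Finset.sum_congr rfl fun b _ => ?_
        simp only [hv, PiLp.toLp_apply, RCLike.inner_apply, RCLike.star_def, _root_.map_mul, Complex.conj_conj,
          Complex.conj_ofReal]
        ring
      rw [hinner]
      by_cases hkk : k = k'
      · subst hkk
        rw [if_pos rfl, if_pos rfl]
        have hs : Real.sqrt (lam k.1) * Real.sqrt (lam k.1) = lam k.1 :=
          Real.mul_self_sqrt (hlam0 k.1)
        have hsne : Real.sqrt (lam k.1) ≠ 0 := ne_of_gt (Real.sqrt_pos.mpr (hlampos k))
        norm_cast
        field_simp
        linarith [hs]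
      · rw [if_neg hkk, if_neg (fun h' => hkk (Subtype.ext h')), mul_zero]
    have hb := hvon.sum_inner_products_le (x := EuclideanSpace.single a (1 : ℂ))
      (s := (Finset.univ : Finset {k : Fin n // lam k ≠ 0}))
    have hx1 : ‖EuclideanSpace.single a (1 : ℂ)‖ ^ 2 = 1 := by
      rw [EuclideanSpace.norm_single]; norm_num
    rw [hx1] at hb
    have hterm : ∀ k : {k : Fin n // lam k ≠ 0},
        ‖(inner ℂ (v k) (EuclideanSpace.single a (1 : ℂ)) : ℂ)‖ ^ 2 = ‖φ a k.1‖ ^ 2 / lam k.1 := by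
      intro k
      have hinner2 : (inner ℂ (v k) (EuclideanSpace.single a (1 : ℂ)) : ℂ)
          = φ a k.1 * (((Real.sqrt (lam k.1))⁻¹ : ℝ) : ℂ) := by
        rw [PiLp.inner_apply]
        rw [Finset.sum_eq_single a]
        · simp only [hv, PiLp.toLp_apply, RCLike.inner_apply, RCLike.star_def, _root_.map_mul, Complex.conj_conj,
            Complex.conj_ofReal, EuclideanSpace.single_apply, if_pos rfl, mul_one]
          simp
        · intro b _ hb2
          simp [hv, EuclideanSpace.single_apply, if_neg hb2]
        · intro hba
          exact absurd (Finset.mem_univ a) hba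
      rw [hinner2, norm_mul, mul_pow]
      have : ‖(((Real.sqrt (lam k.1))⁻¹ : ℝ) : ℂ)‖ ^ 2 = (lam k.1)⁻¹ := by
        rw [Complex.norm_real, Real.norm_eq_abs, abs_of_nonneg (by positivity), inv_pow,
          Real.sq_sqrt (hlam0 k.1)]
      rw [this, div_eq_mul_inv]
    calc ∑ k ∈ Finset.univ.filter (fun k => lam k ≠ 0), ‖φ a k‖ ^ 2 / lam k
        = ∑ k : {k : Fin n // lam k ≠ 0}, ‖φ a k.1‖ ^ 2 / lam k.1 :=
          (Finset.sum_subtype _ (fun k => by simp) _)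
      _ = ∑ k : {k : Fin n // lam k ≠ 0},
            ‖(inner ℂ (v k) (EuclideanSpace.single a (1 : ℂ)) : ℂ)‖ ^ 2 :=
          Finset.sum_congr rfl fun k _ => (hterm k).symm
      _ ≤ 1 := hb
  set T := Finset.univ.filter (fun k => lam k ≠ 0) with hT
  have hmemT : ∀ k, k ∈ T ↔ lam k ≠ 0 := fun k => by simp [hT]
  have step1 : ∑ k, Real.negMulLog (lam k) = ∑ k ∈ T, Real.negMulLog (lam k) := by
    refine (Finset.sum_filter_of_ne fun k _ hne => ?_).symm
    intro h0
    exact hne (by rw [h0, Real.negMulLog_zero])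
  have step2 : ∀ k ∈ T, Real.negMulLog (lam k)
      = ∑ a, (‖φ a k‖ ^ 2 / lam k) * Real.negMulLog (lam k) := by
    intro k hk
    have h1 : ∑ a, ‖φ a k‖ ^ 2 / lam k = 1 := by
      rw [← Finset.sum_div, hcol k, div_self ((hmemT k).mp hk)]
    rw [← Finset.sum_mul, h1, one_mul]
  calc ∑ k, Real.negMulLog (lam k)
      = ∑ k ∈ T, ∑ a, (‖φ a k‖ ^ 2 / lam k) * Real.negMulLog (lam k) := by
        rw [step1]; exact Finset.sum_congr rfl step2
    _ = ∑ a, ∑ k ∈ T, (‖φ a k‖ ^ 2 / lam k) * Real.negMulLog (lam k) := Finset.sum_comm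
    _ ≤ ∑ a, Real.negMulLog (∑ k ∈ T, (‖φ a k‖ ^ 2 / lam k) * lam k) := by
        refine Finset.sum_le_sum fun a _ => ?_
        exact negMulLog_sum_le' T _ lam (fun k _ => div_nonneg (by positivity) (hlam0 k)) (hF3 a)
          (fun k _ => hlam0 k)
    _ = ∑ a, Real.negMulLog (∑ m, ‖ψ a m‖ ^ 2) := by
        refine Finset.sum_congr rfl fun a _ => ?_
        congr 1
        have e1 : ∑ k ∈ T, (‖φ a k‖ ^ 2 / lam k) * lam k = ∑ k ∈ T, ‖φ a k‖ ^ 2 :=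
          Finset.sum_congr rfl fun k hk => div_mul_cancel₀ _ ((hmemT k).mp hk)
        have e2 : ∑ k ∈ T, ‖φ a k‖ ^ 2 = ∑ k, ‖φ a k‖ ^ 2 := by
          refine Finset.sum_subset (Finset.filter_subset _ _) fun k _ hk => ?_
          have h0 : lam k = 0 := by
            by_contra hne
            exact hk ((hmemT k).mpr hne)
          rw [hφzero k h0 a, norm_zero]
          norm_num
        rw [e1, e2, hF1 a]

end MixAux

/-- Concavity bound for the von Neumann entropy of a mixture: for a convex combination
`ρ = Σ_i p_i ρ_i` of density matrices, `S(Σ_i p_i ρ_i) − Σ_i p_i S(ρ_i) ≤ H(p)`,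
where `H(p) = −Σ_i p_i log p_i` is the Shannon entropy of the distribution `(p_i)`. -/
theorem mixing_entropy_bound {n : ℕ} {ι : Type*} [Fintype ι]
    (p : ι → ℝ) (ρ : ι → Matrix (Fin n) (Fin n) ℂ)
    (hp : ∀ i, 0 ≤ p i) (hp1 : ∑ i, p i = 1)
    (hρ : ∀ i, (ρ i).PosSemidef) (htr : ∀ i, (ρ i).trace = 1) :
    vnEntropy (∑ i, (p i : ℂ) • ρ i) - ∑ i, p i * vnEntropy (ρ i) ≤
      ∑ i, Real.negMulLog (p i) := by
  classical
  have hH : ∀ i, (ρ i).IsHermitian := fun i => (hρ i).isHermitian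
  set μ : ι → Fin n → ℝ := fun i => (hH i).eigenvalues with hμ
  have hμ0 : ∀ i j, 0 ≤ μ i j := fun i j => (hρ i).eigenvalues_nonneg j
  set V : ι → Matrix (Fin n) (Fin n) ℂ :=
    fun i => ((hH i).eigenvectorUnitary : Matrix (Fin n) (Fin n) ℂ) with hV
  have hμ1 : ∀ i, ∑ j, μ i j = 1 := by
    intro i
    have htr' : (ρ i).trace = ∑ j, (μ i j : ℂ) := by
      conv_lhs => rw [(hH i).spectral_theorem, Unitary.conjStarAlgAut_apply]
      rw [Matrix.trace_mul_cycle]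
      rw [(Matrix.mem_unitaryGroup_iff').mp ((hH i).eigenvectorUnitary).2, one_mul,
        Matrix.trace_diagonal]
      rfl
    rw [htr i] at htr'
    exact_mod_cast htr'.symm
  set ψ : ι × Fin n → Fin n → ℂ :=
    fun a m => ((Real.sqrt (p a.1 * μ a.1 a.2) : ℝ) : ℂ) * V a.1 m a.2 with hψ
  have hdecomp : (∑ i, (p i : ℂ) • ρ i) = ∑ a : ι × Fin n, vecMulVec (ψ a) (star (ψ a)) := by
    rw [Fintype.sum_prod_type]
    refine Finset.sum_congr rfl fun i _ => ?_
    ext m m'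
    conv_lhs => rw [(hH i).spectral_theorem, Unitary.conjStarAlgAut_apply]
    rw [Matrix.smul_apply, Matrix.mul_assoc, Matrix.mul_apply, Matrix.sum_apply]
    rw [Finset.smul_sum]
    refine Finset.sum_congr rfl fun j _ => ?_
    rw [Matrix.diagonal_mul, vecMulVec_apply]
    have hsq : ((Real.sqrt (p i * μ i j) : ℝ) : ℂ) * ((Real.sqrt (p i * μ i j) : ℝ) : ℂ)
        = ((p i : ℝ) : ℂ) * ((μ i j : ℝ) : ℂ) := by
      rw [← Complex.ofReal_mul, Real.mul_self_sqrt (mul_nonneg (hp i) (hμ0 i j)),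
        Complex.ofReal_mul]
    simp only [Pi.star_apply, Matrix.star_apply, star_mul', Complex.star_def,
      Complex.conj_ofReal, Function.comp_apply, smul_eq_mul, hψ]
    have : (RCLike.ofReal (μ i j) : ℂ) = ((μ i j : ℝ) : ℂ) := rfl
    rw [this]
    trans (((p i : ℝ) : ℂ) * ((μ i j : ℝ) : ℂ)) * (V i m j * (starRingEnd ℂ) (V i m' j))
    · ring
    · rw [← hsq]; ring
  have hnorm : ∀ a : ι × Fin n, ∑ m, ‖ψ a m‖ ^ 2 = p a.1 * μ a.1 a.2 := by
    rintro ⟨i, j⟩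
    have h1 : star (V i) * V i = 1 :=
      (Matrix.mem_unitaryGroup_iff').mp ((hH i).eigenvectorUnitary).2
    have h2 : (star (V i) * V i) j j = 1 := by rw [h1, Matrix.one_apply_eq]
    have h3 : ∑ m, ‖V i m j‖ ^ 2 = 1 := by
      rw [Matrix.mul_apply] at h2
      have h4 : ∀ m, (star (V i)) j m * V i m j = ((‖V i m j‖ ^ 2 : ℝ) : ℂ) := by
        intro m
        rw [Matrix.star_apply, RCLike.star_def, mul_comm, Complex.mul_conj,
          Complex.normSq_eq_norm_sq]
      rw [Finset.sum_congr rfl fun m _ => h4 m, ← Complex.ofReal_sum] at h2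
      exact_mod_cast h2
    have h5 : ∀ m, ‖ψ (i, j) m‖ ^ 2 = (p i * μ i j) * ‖V i m j‖ ^ 2 := by
      intro m
      rw [hψ]
      rw [norm_mul, mul_pow, Complex.norm_real, Real.norm_eq_abs,
        abs_of_nonneg (Real.sqrt_nonneg _), Real.sq_sqrt (mul_nonneg (hp i) (hμ0 i j))]
    rw [Finset.sum_congr rfl fun m _ => h5 m, ← Finset.mul_sum, h3, mul_one]
  have key := entropy_sum_outer_le ψ
  rw [← hdecomp] at key
  have keyr : vnEntropy (∑ i, (p i : ℂ) • ρ i)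
      ≤ ∑ a : ι × Fin n, Real.negMulLog (p a.1 * μ a.1 a.2) :=
    key.trans_eq (Finset.sum_congr rfl fun a _ => by rw [hnorm a])
  have hvn : ∀ i, vnEntropy (ρ i) = ∑ j, Real.negMulLog (μ i j) := by
    intro i; rw [vnEntropy, dif_pos (hH i)]
  have expand : ∑ a : ι × Fin n, Real.negMulLog (p a.1 * μ a.1 a.2)
      = ∑ i, (Real.negMulLog (p i) + p i * vnEntropy (ρ i)) := by
    rw [Fintype.sum_prod_type]
    refine Finset.sum_congr rfl fun i _ => ?_
    rw [hvn i]
    calc ∑ j, Real.negMulLog (p i * μ i j)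
        = ∑ j, (μ i j * Real.negMulLog (p i) + p i * Real.negMulLog (μ i j)) :=
          Finset.sum_congr rfl fun j _ => Real.negMulLog_mul _ _
      _ = (∑ j, μ i j) * Real.negMulLog (p i) + p i * ∑ j, Real.negMulLog (μ i j) := by
          rw [Finset.sum_add_distrib, ← Finset.sum_mul, ← Finset.mul_sum]
      _ = Real.negMulLog (p i) + p i * ∑ j, Real.negMulLog (μ i j) := by
          rw [hμ1 i, one_mul]
  rw [expand, Finset.sum_add_distrib] at keyr
  linarith
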